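/- (Integrality gap for unbounded d-dimAP+.) For every fixed integer d ≥ 1 there is a constant c_d > 0 such that for infinitely many positive integers k the following holds. There exist: a finite set V; a set T ⊆ V with |T| = k; an injective map f₀ : T → ℤ^d; a symmetric weight function w : V × V → ℝ≥0; and a metric dist on V with dist(x,y) = ‖f₀(x) − f₀(y)‖₂ for all x,y ∈ T and satisfying the d-dimensional spreading constraints, such that ∑_{{u,v}} w(u,v)·dist(u,v) > 0 and every injective map f : V → ℤ^d with f(t) = f₀(t) for all t ∈ T satisfies ∑_{{u,v}} w(u,v)·‖f(u) − f(v)‖₂ ≥ c_d · k^{1/(2d)} · ∑_{{u,v}} w(u,v)·dist(u,v). In particular, the integrality gap of the spreading LP for unbounded d-dimAP+ is Ω(k^{1/(2d)}). -/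

import Mathlib

open scoped BigOperators

/-- Euclidean distance between two points of the integer lattice `ℤ^d`. -/
noncomputable def eDist {d : ℕ} (p q : Fin d → ℤ) : ℝ :=
  Real.sqrt (∑ i, ((p i : ℝ) - (q i : ℝ)) ^ 2)

/-- `dist` is a metric on `V`. -/
def IsMetric {V : Type*} (dist : V → V → ℝ) : Prop :=
  (∀ x, dist x x = 0) ∧ (∀ x y, 0 ≤ dist x y) ∧ (∀ x y, dist x y = dist y x) ∧
  (∀ x y z, dist x z ≤ dist x y + dist y z) ∧ (∀ x y, dist x y = 0 → x = y)

/-- An integrality-gap instance for unbounded `d`-dimAP+ with `k` terminals and gap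
parameter `c·k^(1/(2d))`: a feasible spreading-LP solution of positive cost such that
every injective layout `f : V → ℤ^d` extending `f₀` costs at least
`c · k^(1/(2d))` times the LP cost. -/
def UnboundedGapInstance (d : ℕ) (c : ℝ) (k : ℕ) (V : Type)
    [Fintype V] [DecidableEq V] : Prop :=
  ∃ (T : Finset V) (f₀ : {x // x ∈ T} → (Fin d → ℤ)) (w : V → V → ℝ)
    (dist : V → V → ℝ),
    T.card = k ∧
    Function.Injective f₀ ∧
    (∀ u v, w u v = w v u) ∧ (∀ u v, 0 ≤ w u v) ∧ (∀ v, w v v = 0) ∧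
    IsMetric dist ∧
    (∀ x y : {x // x ∈ T}, dist x.1 y.1 = eDist (f₀ x) (f₀ y)) ∧
    (∀ S : Finset V, ∀ u ∈ S,
      ((S.card : ℝ) - 1) ^ ((1 : ℝ) + 1 / (d : ℝ)) / 4 ≤ ∑ v ∈ S, dist u v) ∧
    0 < (∑ u, ∑ v, w u v * dist u v) / 2 ∧
    (∀ f : V → (Fin d → ℤ), Function.Injective f →
      (∀ t (ht : t ∈ T), f t = f₀ ⟨t, ht⟩) →
      c * (k : ℝ) ^ ((1 : ℝ) / (2 * (d : ℝ))) * ((∑ u, ∑ v, w u v * dist u v) / 2) ≤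
        (∑ u, ∑ v, w u v * eDist (f u) (f v)) / 2)

namespace GapAux

open Finset

lemma pow_pair (d a b : ℕ) : (a+1)^d + (b+1)^d ≤ (a+b+1)^d + 1 := by
  induction d with
  | zero => simp
  | succ d ih =>
    have hA : (a+1)^d ≤ (a+b+1)^d := Nat.pow_le_pow_left (by omega) d
    have hB : (b+1)^d ≤ (a+b+1)^d := Nat.pow_le_pow_left (by omega) d
    have h : (a+1)^(d+1) + (b+1)^(d+1) = (a+1)*(a+1)^d + (b+1)*(b+1)^d := by ring
    rw [h, pow_succ (a+b+1)]
    nlinarith [ih, hA, hB]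

lemma pair_sum (d J : ℕ) :
    2 * ∑ t ∈ range (J+1), (2*t+1)^d ≤ (J+1) * ((2*J+1)^d + 1) := by
  have hrefl : ∑ t ∈ range (J+1), (2*(J-t)+1)^d = ∑ t ∈ range (J+1), (2*t+1)^d := by
    rw [← Finset.sum_range_reflect]
    apply Finset.sum_congr rfl
    intro t ht
    simp only [mem_range] at ht
    congr 2
    omega
  have h2 : 2 * ∑ t ∈ range (J+1), (2*t+1)^d
      = ∑ t ∈ range (J+1), ((2*t+1)^d + (2*(J-t)+1)^d) := by
    rw [Finset.sum_add_distrib, hrefl]; ring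
  rw [h2]
  calc ∑ t ∈ range (J+1), ((2*t+1)^d + (2*(J-t)+1)^d)
      ≤ ∑ _t ∈ range (J+1), ((2*J+1)^d + 1) := by
        apply Finset.sum_le_sum
        intro t ht
        simp only [mem_range] at ht
        have h := pow_pair d (2*t) (2*(J-t))
        have h1 : 2*t + (2*(J-t)) + 1 = 2*J+1 := by omega
        rw [h1] at h
        omega
    _ = (J+1) * ((2*J+1)^d + 1) := by
        rw [Finset.sum_const, card_range]; ring

lemma binom (q d : ℕ) (hd : 1 ≤ d) : q^d + d * q^(d-1) ≤ (q+1)^d := by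
  obtain ⟨e, rfl⟩ : ∃ e, d = e + 1 := ⟨d - 1, by omega⟩
  clear hd
  induction e with
  | zero => simp
  | succ e ih =>
    simp only [Nat.add_sub_cancel] at *
    have h3 : (q+1) * (q^(e+1) + (e+1) * q^e) ≤ (q+1) * (q+1)^(e+1) :=
      Nat.mul_le_mul_left _ ih
    have e1 : (q+1) * (q+1)^(e+1) = (q+1)^(e+1+1) := by ring
    have e2 : (q+1) * (q^(e+1) + (e+1) * q^e)
        = q^(e+1+1) + (e+1+1) * q^(e+1) + (e+1) * q^e := by ring
    omega

/-- rpow characterization : for naturals, `(s:ℝ)^(1/d) ≤ z` iff `s ≤ z^d`. -/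
lemma rpow_le_of_le_pow {d s z : ℕ} (hd : 1 ≤ d) (h : s ≤ z^d) :
    (s:ℝ) ^ ((1:ℝ)/d) ≤ z := by
  have hd0 : (d:ℝ) ≠ 0 := by positivity
  have hz : ((z:ℝ)^(d:ℕ)) ^ ((1:ℝ)/d) = z := by
    rw [← Real.rpow_natCast (z:ℝ) d, ← Real.rpow_mul (by positivity)]
    rw [mul_one_div, div_self hd0, Real.rpow_one]
  calc (s:ℝ) ^ ((1:ℝ)/d) ≤ ((z:ℝ)^(d:ℕ)) ^ ((1:ℝ)/d) := by
        apply Real.rpow_le_rpow (by positivity) _ (by positivity)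
        exact_mod_cast h
    _ = z := hz

lemma rpow_eq_of_eq_pow {d s z : ℕ} (hd : 1 ≤ d) (h : s = z^d) :
    (s:ℝ) ^ ((1:ℝ)/d) = z := by
  have hd0 : (d:ℝ) ≠ 0 := by positivity
  subst h
  push_cast
  rw [← Real.rpow_natCast (z:ℝ) d, ← Real.rpow_mul (by positivity)]
  rw [mul_one_div, div_self hd0, Real.rpow_one]


lemma master {d : ℕ} (hd : 1 ≤ d) (s : ℕ) (hs : 1 ≤ s) :
    ∃ N : ℕ, 1 ≤ N ∧
      (s:ℝ) ^ ((1:ℝ) + 1/(d:ℝ)) ≤ 4 * (∑ t ∈ range N, ((s:ℝ) - ((2*t+1)^d : ℕ))) + 1 := by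
  classical
  set P : ℕ → Prop := fun j => (2*j+1)^d ≤ s with hP
  have hP0 : P 0 := by
    have h1 : (2*0+1)^d = 1 := by simp
    simp only [hP, h1]; exact hs
  set J := Nat.findGreatest P s with hJdef
  have hJ : P J := Nat.findGreatest_spec (Nat.zero_le s) hP0
  have hJlt : J < s := by
    have h1 : 2*J+1 ≤ (2*J+1)^d := Nat.le_self_pow (by omega) _
    have h2 := hJ
    simp only [hP] at h2
    omega
  have hJmax : ¬ P (J+1) := fun hcon =>
    Nat.findGreatest_is_greatest (show J < J+1 by omega) (by omega) hcon
  simp only [hP] at hJ hJmax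
  push_neg at hJmax
  refine ⟨J+1, by omega, ?_⟩
  set q : ℕ := 2*J+1 with hq
  have hq1 : 1 ≤ q := by omega
  set A : ℝ := ((q:ℝ))^d with hA
  have hJq : (J:ℝ) + 1 = ((q:ℝ)+1)/2 := by rw [hq]; push_cast; ring
  -- lower bound for the sum
  have hsum : (∑ t ∈ range (J+1), (((2*t+1)^d : ℕ) : ℝ)) * 4 ≤ ((q:ℝ)+1) * (A + 1) := by
    have h := pair_sum d J
    have h2 : ((2 * ∑ t ∈ range (J+1), (2*t+1)^d : ℕ) : ℝ)
        ≤ (((J+1) * ((2*J+1)^d + 1) : ℕ) : ℝ) := by exact_mod_cast h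
    push_cast at h2
    rw [hA, hq]
    push_cast
    have hqe : ((2*(J:ℝ)+1)+1) * ((2*(J:ℝ)+1)^d + 1)
        = 2 * (((J:ℝ)+1) * ((2*(J:ℝ)+1)^d + 1)) := by ring
    rw [hqe]
    linarith [h2]
  have h1 : (∑ t ∈ range (J+1), ((s:ℝ) - ((2*t+1)^d : ℕ)))
      = ((J:ℝ)+1)*(s:ℝ) - ∑ t ∈ range (J+1), (((2*t+1)^d : ℕ):ℝ) := by
    rw [Finset.sum_sub_distrib, Finset.sum_const, card_range, nsmul_eq_mul]
    push_cast
    ring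
  have hSigma : 2*((q:ℝ)+1)*(s:ℝ) - ((q:ℝ)+1)*(A+1) + 1
      ≤ 4 * (∑ t ∈ range (J+1), ((s:ℝ) - ((2*t+1)^d : ℕ))) + 1 := by
    rw [h1, hJq]
    linarith [hsum]
  have hs0 : (0:ℝ) < s := by exact_mod_cast hs
  have hxsplit : (s:ℝ) ^ ((1:ℝ) + 1/(d:ℝ)) = s * ((s:ℝ)^((1:ℝ)/(d:ℝ))) := by
    rw [Real.rpow_add hs0, Real.rpow_one]
  rw [hxsplit]
  set x : ℝ := (s:ℝ)^((1:ℝ)/(d:ℝ)) with hx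
  rcases Nat.lt_or_ge ((q+1)^d) s with hc | hc
  · -- (q+1)^d < s ≤ (q+2)^d
    have hupp : s ≤ (q+2)^d := by
      have h2 : (2*(J+1)+1) = q+2 := by omega
      rw [h2] at hJmax
      omega
    have hxle : x ≤ (q:ℝ)+2 := by
      have h := rpow_le_of_le_pow hd hupp
      rw [← hx] at h; push_cast at h; linarith
    have hns : q^(d+1) + q^d + q ≤ q * s := by
      have e3 : q * q^(d-1) = q^d := by
        have h : q^((d-1)+1) = q * q^(d-1) := pow_succ' q (d-1)
        rw [← h]; congr 1; omega
      have h4 : q * (q^d + d * q^(d-1)) ≤ q * (q+1)^d :=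
        Nat.mul_le_mul_left _ (binom q d hd)
      have h6 : q * (q^d + d * q^(d-1)) = q^(d+1) + d * q^d := by
        rw [Nat.mul_add, ← pow_succ']
        congr 1
        rw [Nat.mul_left_comm, e3]
      have h7 : q^d ≤ d * q^d := Nat.le_mul_of_pos_left _ (by omega)
      calc q^(d+1) + q^d + q ≤ q^(d+1) + d * q^d + q := by omega
        _ = q * (q^d + d * q^(d-1)) + q := by rw [h6]
        _ ≤ q * (q+1)^d + q := by omega
        _ = q * ((q+1)^d + 1) := by ring
        _ ≤ q * s := Nat.mul_le_mul_left _ (by omega)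
    have hns' : (q:ℝ)^(d+1) + A + q ≤ (q:ℝ) * s := by
      rw [hA]; exact_mod_cast hns
    have hpow : (q:ℝ)^(d+1) = A * q := by rw [hA, pow_succ]
    nlinarith [hSigma, hns', hpow, mul_le_mul_of_nonneg_left hxle hs0.le]
  · -- s ≤ (q+1)^d
    rcases Nat.eq_or_lt_of_le hJ with hseq | hlo
    · -- s = q^d
      have hxeq : x = q := by
        have h := rpow_eq_of_eq_pow hd hseq.symm
        rw [← hx] at h; exact h
      have hqs : (q:ℝ) ≤ s := by
        have h : q ≤ s := le_trans (Nat.le_self_pow (by omega) q) hJ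
        exact_mod_cast h
      have hseq' : A = s := by rw [hA]; exact_mod_cast hseq
      rw [hseq'] at hSigma
      rw [hxeq]
      nlinarith [hSigma, hqs, hs0]
    · -- q^d < s ≤ (q+1)^d
      have hxle : x ≤ (q:ℝ)+1 := by
        have h := rpow_le_of_le_pow hd hc
        rw [← hx] at h; push_cast at h; linarith
      have hlo' : A + 1 ≤ s := by
        rw [hA]
        have h : (q^d + 1 : ℕ) ≤ s := by omega
        exact_mod_cast h
      nlinarith [hSigma, mul_le_mul_of_nonneg_left hxle hs0.le,
        mul_le_mul_of_nonneg_left hlo' (show (0:ℝ) ≤ (q:ℝ)+1 by positivity)]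


/-- cast into Euclidean space -/
noncomputable def F (p : Fin d → ℤ) : EuclideanSpace ℝ (Fin d) := WithLp.toLp 2 (fun i => (p i : ℝ))

lemma eDist_eq (p q : Fin d → ℤ) : eDist p q = dist (F p) (F q) := by
  rw [EuclideanSpace.dist_eq]
  unfold eDist F
  congr 1
  apply Finset.sum_congr rfl
  intro i _
  rw [Real.dist_eq, sq_abs]

lemma eDist_self (p : Fin d → ℤ) : eDist p p = 0 := by rw [eDist_eq, dist_self]

lemma eDist_comm (p q : Fin d → ℤ) : eDist p q = eDist q p := by
  rw [eDist_eq, eDist_eq, dist_comm]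

lemma eDist_nonneg (p q : Fin d → ℤ) : 0 ≤ eDist p q := by
  rw [eDist_eq]; exact dist_nonneg

lemma eDist_triangle (p q r : Fin d → ℤ) : eDist p r ≤ eDist p q + eDist q r := by
  rw [eDist_eq, eDist_eq, eDist_eq]; exact dist_triangle _ _ _

lemma F_injective : Function.Injective (F (d := d)) := by
  intro p q h
  funext i
  have h2 : ((p i : ℝ)) = ((q i : ℝ)) := congrArg (fun x : EuclideanSpace ℝ (Fin d) => x i) h
  exact_mod_cast h2

lemma eDist_pos {p q : Fin d → ℤ} (h : p ≠ q) : 0 < eDist p q := by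
  rw [eDist_eq]
  rw [dist_pos]
  exact fun hc => h (F_injective hc)

lemma coord_le_eDist (p q : Fin d → ℤ) (i : Fin d) :
    |((p i : ℝ) - (q i : ℝ))| ≤ eDist p q := by
  unfold eDist
  rw [← Real.sqrt_sq_eq_abs]
  apply Real.sqrt_le_sqrt
  exact Finset.single_le_sum (f := fun i => ((p i : ℝ) - (q i : ℝ))^2)
    (fun j _ => sq_nonneg _) (Finset.mem_univ i)

/-- counting: points of `P` at distance < t+1 from `c` number at most `(2t+1)^d` -/
lemma count_le (P : Finset (Fin d → ℤ)) (c : Fin d → ℤ) (t : ℕ) :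
    (P.filter (fun p => eDist c p < t+1)).card ≤ (2*t+1)^d := by
  classical
  have hmaps : ∀ p ∈ P.filter (fun p => eDist c p < t+1),
      (fun i : Fin d => ((p i - c i + t).toNat : ℕ)) ∈
        (Finset.univ : Finset (Fin d → Fin (2*t+1))).image (fun g i => (g i : ℕ)) := by
    intro p hp
    simp only [Finset.mem_filter] at hp
    have hco : ∀ i, (p i - c i + t).toNat < 2*t+1 := by
      intro i
      have h1 : |((p i : ℝ) - (c i : ℝ))| ≤ eDist c p := by
        rw [eDist_comm]; exact coord_le_eDist p c i
      have h2 : |((p i : ℝ) - (c i : ℝ))| < t+1 := lt_of_le_of_lt h1 hp.2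
      have h3 : ((|p i - c i| : ℤ) : ℝ) < t+1 := by push_cast at h2 ⊢; exact h2
      have h4 : |p i - c i| < (t:ℤ)+1 := by exact_mod_cast h3
      rw [abs_lt] at h4
      omega
    simp only [Finset.mem_image]
    refine ⟨fun i => ⟨(p i - c i + t).toNat, hco i⟩, Finset.mem_univ _, rfl⟩
  have hinj : ∀ p ∈ P.filter (fun p => eDist c p < t+1),
      ∀ p' ∈ P.filter (fun p => eDist c p < t+1),
      (fun i : Fin d => ((p i - c i + t).toNat : ℕ)) =
        (fun i : Fin d => ((p' i - c i + t).toNat : ℕ)) → p = p' := by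
    intro p hp p' hp' he
    simp only [Finset.mem_filter] at hp hp'
    funext i
    have h1 := congrFun he i
    have hi : |((p i : ℝ) - (c i : ℝ))| < t+1 := lt_of_le_of_lt
      (by rw [eDist_comm]; exact coord_le_eDist p c i) hp.2
    have hi' : |((p' i : ℝ) - (c i : ℝ))| < t+1 := lt_of_le_of_lt
      (by rw [eDist_comm]; exact coord_le_eDist p' c i) hp'.2
    have hzi : |p i - c i| < (t:ℤ)+1 := by exact_mod_cast (by push_cast at hi ⊢; exact hi : ((|p i - c i| : ℤ) : ℝ) < t+1)
    have hzi' : |p' i - c i| < (t:ℤ)+1 := by exact_mod_cast (by push_cast at hi' ⊢; exact hi' : ((|p' i - c i| : ℤ) : ℝ) < t+1)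
    rw [abs_lt] at hzi hzi'
    omega
  calc (P.filter (fun p => eDist c p < t+1)).card
      ≤ ((Finset.univ : Finset (Fin d → Fin (2*t+1))).image (fun g i => (g i : ℕ))).card :=
        Finset.card_le_card_of_injOn _ hmaps hinj
    _ ≤ (Finset.univ : Finset (Fin d → Fin (2*t+1))).card := Finset.card_image_le
    _ = (2*t+1)^d := by simp [Fintype.card_fun]

/-- the core spreading estimate for lattice points -/
lemma core (P : Finset (Fin d → ℤ)) (c : Fin d → ℤ) (N : ℕ) :
    ∑ t ∈ range N, ((P.card:ℝ) - ((2*t+1)^d : ℕ)) ≤ ∑ p ∈ P, eDist c p := by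
  classical
  have key : ∀ t ∈ range N, ((P.card:ℝ) - ((2*t+1)^d : ℕ))
      ≤ ((P.filter (fun p => (t:ℝ)+1 ≤ eDist c p)).card : ℝ) := by
    intro t _
    have hsplit : P.card = (P.filter (fun p => (t:ℝ)+1 ≤ eDist c p)).card
        + (P.filter (fun p => ¬ ((t:ℝ)+1 ≤ eDist c p))).card :=
      (Finset.card_filter_add_card_filter_not _).symm
    have hcnt : (P.filter (fun p => ¬ ((t:ℝ)+1 ≤ eDist c p))).card ≤ (2*t+1)^d := by
      have : (P.filter (fun p => ¬ ((t:ℝ)+1 ≤ eDist c p)))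
          = (P.filter (fun p => eDist c p < t+1)) := by
        apply Finset.filter_congr
        intro p _
        simp [not_le]
      rw [this]
      exact count_le P c t
    have h0 : P.card ≤ (P.filter (fun p => (t:ℝ)+1 ≤ eDist c p)).card + (2*t+1)^d := by omega
    have h1 : ((P.card : ℝ)) ≤ ((P.filter (fun p => (t:ℝ)+1 ≤ eDist c p)).card : ℝ)
        + (((2*t+1)^d : ℕ) : ℝ) := by exact_mod_cast h0
    linarith
  calc ∑ t ∈ range N, ((P.card:ℝ) - ((2*t+1)^d : ℕ))
      ≤ ∑ t ∈ range N, ((P.filter (fun p => (t:ℝ)+1 ≤ eDist c p)).card : ℝ) :=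
        Finset.sum_le_sum key
    _ = ∑ t ∈ range N, ∑ p ∈ P, (if (t:ℝ)+1 ≤ eDist c p then (1:ℝ) else 0) := by
        apply Finset.sum_congr rfl
        intro t _
        rw [Finset.sum_boole]
    _ = ∑ p ∈ P, ∑ t ∈ range N, (if (t:ℝ)+1 ≤ eDist c p then (1:ℝ) else 0) := Finset.sum_comm
    _ ≤ ∑ p ∈ P, eDist c p := by
        apply Finset.sum_le_sum
        intro p _
        -- the number of integers t with t+1 ≤ e is at most e
        have he : 0 ≤ eDist c p := eDist_nonneg c p
        have hsub : (range N).filter (fun t : ℕ => ((t:ℝ))+1 ≤ eDist c p) ⊆ range (⌊eDist c p⌋₊) := by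
          intro t ht
          simp only [Finset.mem_filter, Finset.mem_range] at ht ⊢
          have : (t+1 : ℕ) ≤ ⌊eDist c p⌋₊ := Nat.le_floor (by exact_mod_cast ht.2)
          omega
        calc ∑ t ∈ range N, (if (t:ℝ)+1 ≤ eDist c p then (1:ℝ) else 0)
            = (((range N).filter (fun t : ℕ => ((t:ℝ))+1 ≤ eDist c p)).card : ℝ) := by
              rw [Finset.sum_boole]
          _ ≤ ((range (⌊eDist c p⌋₊)).card : ℝ) := by
              exact_mod_cast Finset.card_le_card hsub
          _ = (⌊eDist c p⌋₊ : ℝ) := by rw [Finset.card_range]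
          _ ≤ eDist c p := Nat.floor_le he


section Inst

variable (d K : ℕ)

abbrev B := Fin d → Fin (2*K+1)
abbrev Vt := Option (B d K)

def iota : B d K → Fin d → ℤ := fun p i => ((p i : ℕ) : ℤ)

def c0 : Fin d → ℤ := fun _ => (K : ℤ)

def cen : B d K := fun _ => ⟨K, by omega⟩

def posn : Vt d K → Fin d → ℤ
  | none => c0 d K
  | some p => iota d K p

noncomputable def dst : Vt d K → Vt d K → ℝ := fun v w =>
  if v = w then 0
  else eDist (posn d K v) (posn d K w) + (if v = none ∨ w = none then (1/4 : ℝ) else 0)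

noncomputable def wt : Vt d K → Vt d K → ℝ := fun u v =>
  if (u = none ∧ v = some (cen d K)) ∨ (v = none ∧ u = some (cen d K)) then 1 else 0

lemma iota_inj : Function.Injective (iota d K) := by
  intro p q h
  funext i
  have h2 : ((p i : ℕ) : ℤ) = ((q i : ℕ) : ℤ) := congrFun h i
  have h3 : (p i : ℕ) = (q i : ℕ) := by exact_mod_cast h2
  exact Fin.ext h3

lemma iota_cen : iota d K (cen d K) = c0 d K := by
  funext i
  simp [iota, cen, c0]

lemma dst_self (v : Vt d K) : dst d K v v = 0 := by simp [dst]

lemma pen_nonneg (v w : Vt d K) : (0:ℝ) ≤ (if v = none ∨ w = none then (1/4 : ℝ) else 0) := by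
  split <;> norm_num

lemma dst_nonneg (v w : Vt d K) : 0 ≤ dst d K v w := by
  unfold dst
  split
  · exact le_refl 0
  · exact add_nonneg (eDist_nonneg _ _) (pen_nonneg d K v w)

lemma dst_comm (v w : Vt d K) : dst d K v w = dst d K w v := by
  unfold dst
  by_cases h : v = w
  · simp [h]
  · have h' : ¬ (w = v) := fun hc => h hc.symm
    rw [if_neg h, if_neg h', eDist_comm]
    congr 1
    exact if_congr or_comm rfl rfl

lemma dst_eq_zero {v w : Vt d K} (h : dst d K v w = 0) : v = w := by
  by_contra hne
  unfold dst at h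
  rw [if_neg hne] at h
  by_cases hn : v = none ∨ w = none
  · rw [if_pos hn] at h
    have := eDist_nonneg (posn d K v) (posn d K w)
    linarith
  · rw [if_neg hn] at h
    push_neg at hn
    obtain ⟨p, hp⟩ := Option.ne_none_iff_exists.mp hn.1
    obtain ⟨q, hq⟩ := Option.ne_none_iff_exists.mp hn.2
    have hpq : p ≠ q := by
      intro hc; exact hne (by rw [← hp, ← hq, hc])
    have hpos : 0 < eDist (posn d K v) (posn d K w) := by
      have : posn d K v = iota d K p := by rw [← hp]; rfl
      have h2 : posn d K w = iota d K q := by rw [← hq]; rfl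
      rw [this, h2]
      exact eDist_pos (fun hc => hpq (iota_inj d K hc))
    linarith

lemma dst_triangle (x y z : Vt d K) : dst d K x z ≤ dst d K x y + dst d K y z := by
  by_cases hxz : x = z
  · subst hxz
    rw [dst_self]
    exact add_nonneg (dst_nonneg d K x y) (dst_nonneg d K y x)
  by_cases hxy : x = y
  · rw [hxy, dst_self, zero_add]
  by_cases hyz : y = z
  · rw [hyz, dst_self, add_zero]
  unfold dst
  rw [if_neg hxz, if_neg hxy, if_neg hyz]
  have htri := eDist_triangle (posn d K x) (posn d K y) (posn d K z)
  have hpen : (if x = none ∨ z = none then (1/4:ℝ) else 0)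
      ≤ (if x = none ∨ y = none then (1/4:ℝ) else 0)
        + (if y = none ∨ z = none then (1/4:ℝ) else 0) := by
    by_cases h : x = none ∨ z = none
    · rw [if_pos h]
      rcases h with h | h
      · rw [if_pos (Or.inl h)]
        linarith [pen_nonneg d K y z]
      · rw [if_pos (Or.inr h)]
        linarith [pen_nonneg d K x y]
    · rw [if_neg h]
      linarith [pen_nonneg d K x y, pen_nonneg d K y z]
  linarith

lemma dst_metric : IsMetric (dst d K) :=
  ⟨dst_self d K, dst_nonneg d K, dst_comm d K, dst_triangle d K,
   fun _ _ h => dst_eq_zero d K h⟩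

lemma dst_terminal (p q : B d K) :
    dst d K (some p) (some q) = eDist (iota d K p) (iota d K q) := by
  unfold dst
  by_cases h : p = q
  · rw [h, if_pos rfl, eDist_self]
  · have hne : (some p : Vt d K) ≠ some q := fun hc => h (Option.some_injective _ hc)
    rw [if_neg hne, if_neg (by simp), add_zero]
    rfl

/-- the spreading property -/
lemma spreading (hd : 1 ≤ d) (S : Finset (Vt d K)) (u : Vt d K) (hu : u ∈ S) :
    ((S.card : ℝ) - 1) ^ ((1:ℝ) + 1/(d:ℝ)) / 4 ≤ ∑ v ∈ S, dst d K u v := by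
  classical
  have hS1 : 1 ≤ S.card := Finset.card_pos.mpr ⟨u, hu⟩
  set s : ℕ := S.card - 1 with hs
  have hcast : (S.card : ℝ) - 1 = (s:ℝ) := by
    rw [hs]; push_cast [Nat.cast_sub hS1]; ring
  rw [hcast]
  have hsum_nonneg : 0 ≤ ∑ v ∈ S, dst d K u v :=
    Finset.sum_nonneg (fun v _ => dst_nonneg d K u v)
  rcases Nat.eq_zero_or_pos s with hs0 | hs1
  · rw [hs0]
    rw [show ((0:ℕ):ℝ) = 0 by norm_num, Real.zero_rpow (by positivity)]
    simpa using hsum_nonneg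
  obtain ⟨N, hN1, hmaster⟩ := master hd s hs1
  set S' := S.erase none with hS'
  set P := S'.image (posn d K) with hP
  have hinj : Set.InjOn (posn d K) S' := by
    intro v hv w hw hvw
    have hv' : v ≠ none := Finset.ne_of_mem_erase hv
    have hw' : w ≠ none := Finset.ne_of_mem_erase hw
    obtain ⟨p, hp⟩ := Option.ne_none_iff_exists.mp hv'
    obtain ⟨q, hq⟩ := Option.ne_none_iff_exists.mp hw'
    rw [← hp, ← hq] at hvw ⊢
    have : iota d K p = iota d K q := hvw
    rw [iota_inj d K this]
  have hPcard : P.card = S'.card := Finset.card_image_of_injOn hinj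
  -- sum over image
  have himg : ∀ c : Fin d → ℤ, ∑ p ∈ P, eDist c p = ∑ v ∈ S', eDist c (posn d K v) := by
    intro c
    rw [hP, Finset.sum_image (fun x hx y hy h => hinj hx hy h)]
  cases u with
  | none =>
    have hcard' : S'.card = s := by
      rw [hS', Finset.card_erase_of_mem hu, hs]
    have hsum1 : ∑ v ∈ S, dst d K none v = ∑ v ∈ S', dst d K none v := by
      rw [hS']
      exact (Finset.sum_erase S (dst_self d K none)).symm
    have hsum2 : ∑ v ∈ S', dst d K none v
        = (∑ v ∈ S', eDist (c0 d K) (posn d K v)) + (S'.card : ℝ) * (1/4) := by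
      have hpt : ∀ v ∈ S', dst d K none v = eDist (c0 d K) (posn d K v) + 1/4 := by
        intro v hv
        have hv' : v ≠ none := Finset.ne_of_mem_erase hv
        unfold dst
        rw [if_neg (fun hc => hv' hc.symm), if_pos (Or.inl rfl)]
        rfl
      rw [Finset.sum_congr rfl hpt, Finset.sum_add_distrib, Finset.sum_const,
        nsmul_eq_mul]
    have hcore := core P (c0 d K) N
    rw [hPcard, hcard', himg] at hcore
    rw [hsum1, hsum2, hcard']
    have h1s : (1:ℝ) ≤ (s:ℝ) := by exact_mod_cast hs1
    linarith [hmaster, hcore]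
  | some p₀ =>
    have hterm : ∀ v ∈ S', dst d K (some p₀) v = eDist (iota d K p₀) (posn d K v) := by
      intro v hv
      have hv' : v ≠ none := Finset.ne_of_mem_erase hv
      by_cases he : (some p₀ : Vt d K) = v
      · rw [← he, dst_self]
        exact (eDist_self _).symm
      · unfold dst
        rw [if_neg he, if_neg (by
          rintro (hc | hc)
          · exact Option.some_ne_none p₀ hc
          · exact hv' hc), add_zero]
        rfl
    have hsum3 : ∑ v ∈ S', dst d K (some p₀) v = ∑ p ∈ P, eDist (iota d K p₀) p := by
      rw [Finset.sum_congr rfl hterm, himg]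
    by_cases hn : (none : Vt d K) ∈ S
    · have hcard' : S'.card = s := by
        rw [hS', Finset.card_erase_of_mem hn, hs]
      have hsplit : ∑ v ∈ S, dst d K (some p₀) v
          = dst d K (some p₀) none + ∑ v ∈ S', dst d K (some p₀) v := by
        rw [hS']
        exact (Finset.add_sum_erase S _ hn).symm
      have hqu : (1/4 : ℝ) ≤ dst d K (some p₀) none := by
        unfold dst
        rw [if_neg (Option.some_ne_none p₀), if_pos (Or.inr rfl)]
        linarith [eDist_nonneg (posn d K (some p₀)) (posn d K none)]
      have hcore := core P (iota d K p₀) N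
      rw [hPcard, hcard'] at hcore
      rw [hsplit, hsum3]
      linarith [hmaster, hcore]
    · have hSS : S' = S := Finset.erase_eq_of_notMem hn
      have hcard2 : P.card = s + 1 := by
        rw [hPcard, hSS, hs]; omega
      have hsum4 : ∑ v ∈ S, dst d K (some p₀) v = ∑ p ∈ P, eDist (iota d K p₀) p := by
        rw [← hsum3, hSS]
      have hcore := core P (iota d K p₀) N
      rw [hcard2] at hcore
      have hshift : ∑ t ∈ range N, (((s+1 : ℕ):ℝ) - ((2*t+1)^d : ℕ))
          = (∑ t ∈ range N, ((s:ℝ) - ((2*t+1)^d : ℕ))) + N := by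
        have : ∀ t ∈ range N, (((s+1 : ℕ):ℝ) - ((2*t+1)^d : ℕ))
            = ((s:ℝ) - ((2*t+1)^d : ℕ)) + 1 := by
          intro t _
          push_cast
          ring
        rw [Finset.sum_congr rfl this, Finset.sum_add_distrib, Finset.sum_const,
          nsmul_eq_mul, mul_one, card_range]
      rw [hshift] at hcore
      have hN1' : (1:ℝ) ≤ (N:ℝ) := by exact_mod_cast hN1
      rw [hsum4]
      linarith [hmaster, hcore]


def Tm : Finset (Vt d K) := Finset.univ.image some

lemma mem_Tm (p : B d K) : some p ∈ Tm d K := by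
  simp [Tm]

lemma Tm_ex {x : Vt d K} (hx : x ∈ Tm d K) : ∃ p : B d K, x = some p := by
  simp only [Tm, Finset.mem_image, Finset.mem_univ, true_and] at hx
  obtain ⟨p, hp⟩ := hx
  exact ⟨p, hp.symm⟩

lemma Tm_card : (Tm d K).card = (2*K+1)^d := by
  rw [Tm, Finset.card_image_of_injective _ (Option.some_injective _), Finset.card_univ]
  simp

noncomputable def f0 : {x // x ∈ Tm d K} → Fin d → ℤ :=
  fun x => iota d K (x.1.getD (cen d K))

lemma f0_some (p : B d K) (h : some p ∈ Tm d K) : f0 d K ⟨some p, h⟩ = iota d K p := rfl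

lemma f0_inj : Function.Injective (f0 d K) := by
  rintro ⟨x, hx⟩ ⟨y, hy⟩ h
  obtain ⟨p, rfl⟩ := Tm_ex d K hx
  obtain ⟨q, rfl⟩ := Tm_ex d K hy
  have : p = q := iota_inj d K (by simpa [f0] using h)
  simp [this]

lemma wsum (g : Vt d K → Vt d K → ℝ) :
    ∑ u, ∑ v, wt d K u v * g u v
      = g none (some (cen d K)) + g (some (cen d K)) none := by
  classical
  set A : Vt d K := some (cen d K) with hA
  have hsplit : ∀ u v : Vt d K, wt d K u v * g u v
      = (if u = none ∧ v = A then g u v else 0)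
        + (if u = A ∧ v = none then g u v else 0) := by
    intro u v
    unfold wt
    by_cases h1 : u = none ∧ v = A
    · have hn2 : ¬ (u = A ∧ v = none) := by
        rintro ⟨ha, _⟩; rw [h1.1] at ha; simp [hA] at ha
      rw [if_pos (Or.inl h1), if_pos h1, if_neg hn2, one_mul, add_zero]
    · by_cases h2 : v = none ∧ u = A
      · rw [if_pos (Or.inr h2), if_neg h1, if_pos ⟨h2.2, h2.1⟩, one_mul, zero_add]
      · have hn3 : ¬ ((u = none ∧ v = A) ∨ (v = none ∧ u = A)) := by
          rintro (h | h)
          · exact h1 h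
          · exact h2 h
        rw [if_neg hn3, if_neg h1, if_neg (by rintro ⟨ha, hb⟩; exact h2 ⟨hb, ha⟩),
          zero_mul, add_zero]
  have inner1 : ∀ u : Vt d K,
      (∑ v, if u = none ∧ v = A then g u v else 0) = if u = none then g u A else 0 := by
    intro u
    by_cases hu : u = none
    · simp only [hu, true_and, if_pos]
      exact Finset.sum_ite_eq' Finset.univ A (fun v => g none v) |>.trans (by simp)
    · simp [hu]
  have inner2 : ∀ u : Vt d K,
      (∑ v, if u = A ∧ v = none then g u v else 0) = if u = A then g u none else 0 := by
    intro u
    by_cases hu : u = A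
    · simp only [hu, true_and, if_pos]
      exact Finset.sum_ite_eq' Finset.univ none (fun v => g A v) |>.trans (by simp)
    · simp [hu]
  calc ∑ u, ∑ v, wt d K u v * g u v
      = ∑ u : Vt d K, ((∑ v, if u = none ∧ v = A then g u v else 0)
          + (∑ v, if u = A ∧ v = none then g u v else 0)) := by
        apply Finset.sum_congr rfl
        intro u _
        rw [← Finset.sum_add_distrib]
        exact Finset.sum_congr rfl (fun v _ => hsplit u v)
    _ = (∑ u : Vt d K, if u = none then g u A else 0)
          + (∑ u : Vt d K, if u = A then g u none else 0) := by
        rw [Finset.sum_add_distrib]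
        congr 1
        · exact Finset.sum_congr rfl (fun u _ => inner1 u)
        · exact Finset.sum_congr rfl (fun u _ => inner2 u)
    _ = g none A + g A none := by
        congr 1
        · exact Finset.sum_ite_eq' Finset.univ none (fun u => g u A) |>.trans (by simp)
        · exact Finset.sum_ite_eq' Finset.univ A (fun u => g u none) |>.trans (by simp)

lemma dst_none_A : dst d K none (some (cen d K)) = 1/4 := by
  unfold dst
  rw [if_neg (by simp), if_pos (Or.inl rfl)]
  have : posn d K (some (cen d K)) = c0 d K := iota_cen d K
  rw [show posn d K none = c0 d K from rfl, this, eDist_self]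
  norm_num


end Inst

theorem main (d : ℕ) (hd : 1 ≤ d) :
    ∃ c : ℝ, 0 < c ∧
    ∀ K : ℕ, ∃ k : ℕ, K ≤ k ∧
      ∃ (V : Type) (i1 : Fintype V) (i2 : DecidableEq V),
        @UnboundedGapInstance d c k V i1 i2 := by
  refine ⟨1, one_pos, fun K => ?_⟩
  refine ⟨(2*K+1)^d, ?_, Vt d K, inferInstance, inferInstance, ?_⟩
  · calc K ≤ 2*K+1 := by omega
      _ ≤ (2*K+1)^d := Nat.le_self_pow (by omega) _
  refine ⟨Tm d K, f0 d K, wt d K, dst d K, Tm_card d K, f0_inj d K, ?_, ?_, ?_,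
    dst_metric d K, ?_, fun S u hu => spreading d K hd S u hu, ?_, ?_⟩
  · -- symmetry of w
    intro u v
    unfold wt
    congr 1
    exact propext or_comm
  · intro u v
    unfold wt
    split <;> norm_num
  · intro v
    unfold wt
    rw [if_neg]
    rintro (⟨h1, h2⟩ | ⟨h1, h2⟩) <;> (rw [h1] at h2; simp at h2)
  · -- terminal distances
    rintro ⟨x, hx⟩ ⟨y, hy⟩
    obtain ⟨p, rfl⟩ := Tm_ex d K hx
    obtain ⟨q, rfl⟩ := Tm_ex d K hy
    rw [dst_terminal, f0_some, f0_some]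
  · -- positive LP value
    rw [wsum]
    rw [dst_none_A, dst_comm, dst_none_A]
    norm_num
  · -- the gap condition
    intro f hfinj hfext
    rw [wsum, wsum]
    rw [dst_none_A, dst_comm, dst_none_A]
    have hfA : f (some (cen d K)) = c0 d K := by
      rw [hfext _ (mem_Tm d K (cen d K)), f0_some, iota_cen]
    rw [hfA]
    have heq : eDist (f (some (cen d K))) (f none) = eDist (f none) (f (some (cen d K))) :=
      eDist_comm _ _
    -- ∃ coordinate outside the box
    have hout : ∃ i, f none i < 0 ∨ (2*(K:ℤ)) < f none i := by
      by_contra hcon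
      push_neg at hcon
      set p : B d K := fun i => ⟨(f none i).toNat, by
        have := hcon i
        omega⟩ with hp
      have hip : iota d K p = f none := by
        funext i
        have := hcon i
        simp only [iota, hp]
        omega
      have : f (some p) = f none := by
        rw [hfext _ (mem_Tm d K p), f0_some, hip]
      exact absurd (hfinj this) (by simp)
    obtain ⟨i, hi⟩ := hout
    have hclow : ((K:ℝ) + 1) ≤ eDist (f none) (c0 d K) := by
      have h1 : ((K:ℤ) + 1) ≤ |f none i - (K:ℤ)| := by
        rcases hi with h | h
        · have he : |f none i - (K:ℤ)| = (K:ℤ) - f none i := by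
            rw [abs_sub_comm]
            exact abs_of_nonneg (by omega)
          omega
        · have he : |f none i - (K:ℤ)| = f none i - (K:ℤ) := abs_of_nonneg (by omega)
          omega
      have h2 : ((K:ℝ) + 1) ≤ |((f none i : ℤ):ℝ) - (((K:ℤ)):ℝ)| := by
        have h3 : (((K:ℤ) + 1 : ℤ):ℝ) ≤ ((|f none i - (K:ℤ)| : ℤ):ℝ) := by
          exact_mod_cast h1
        rw [Int.cast_abs, Int.cast_sub] at h3
        push_cast at h3 ⊢
        linarith
      have h4 := coord_le_eDist (f none) (c0 d K) i
      have h5 : ((c0 d K i : ℤ):ℝ) = ((K:ℤ):ℝ) := rfl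
      rw [h5] at h4
      exact le_trans h2 h4
    have hR : (eDist (f none) (c0 d K) + eDist (c0 d K) (f none))/2
        = eDist (f none) (c0 d K) := by
      rw [eDist_comm (c0 d K) (f none)]
      ring
    rw [hR]
    have hk : ((((2*K+1)^d : ℕ)):ℝ) = ((2*(K:ℝ)+1))^(d:ℕ) := by push_cast; ring
    rw [hk]
    have hK0 : (0:ℝ) ≤ (K:ℝ) := Nat.cast_nonneg K
    have hd0 : ((d:ℝ)) ≠ 0 := by
      have : (1:ℝ) ≤ (d:ℝ) := by exact_mod_cast hd
      linarith
    have hrp : ((2*(K:ℝ)+1)^(d:ℕ)) ^ ((1:ℝ)/(2*(d:ℝ))) = (2*(K:ℝ)+1) ^ ((1:ℝ)/2) := by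
      rw [← Real.rpow_natCast (2*(K:ℝ)+1) d, ← Real.rpow_mul (by linarith)]
      congr 1
      field_simp
    rw [hrp]
    have hsq : (2*(K:ℝ)+1) ^ ((1:ℝ)/2) ≤ 2*(K:ℝ)+1 := by
      rw [← Real.sqrt_eq_rpow]
      have h1le : (1:ℝ) ≤ 2*(K:ℝ)+1 := by linarith
      calc Real.sqrt (2*(K:ℝ)+1) ≤ Real.sqrt ((2*(K:ℝ)+1)^2) := by
            apply Real.sqrt_le_sqrt
            nlinarith
        _ = 2*(K:ℝ)+1 := Real.sqrt_sq (by linarith)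
    nlinarith [hclow, hsq]


end GapAux

/-- Integrality gap for unbounded `d`-dimAP+: for every fixed `d ≥ 1` there is a
constant `c_d > 0` such that for infinitely many `k` there is an instance with `k`
terminals on which every integral solution costs at least `c_d·k^(1/(2d))` times the
LP cost. -/
theorem unbounded_ddimap_plus_integrality_gap (d : ℕ) (hd : 1 ≤ d) :
    ∃ c : ℝ, 0 < c ∧
    ∀ K : ℕ, ∃ k : ℕ, K ≤ k ∧
      ∃ (V : Type) (i1 : Fintype V) (i2 : DecidableEq V),
        @UnboundedGapInstance d c k V i1 i2 :=
  GapAux.main d hd
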